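/- Let A, Z be n×n Hermitian matrices with 0 ≤ A ≤ I and Z positive definite with largest eigenvalue a and smallest eigenvalue b. Then AZA ≤ ((a+b)²/(4ab)) · Z in the Loewner order. -/

import Mathlib

open scoped ComplexOrder
open Matrix

private lemma conj_poly {m : Type*} [Fintype m] [DecidableEq m]
    (U D : Matrix m m ℂ) (h1 : U * star U = 1) (h2 : star U * U = 1) (x y : ℂ) :
    x • (U * D * star U) - (U * D * star U) * (U * D * star U) - y • 1
      = U * (x • D - D * D - y • 1) * star U := by
  have hmul : (U * D * star U) * (U * D * star U) = U * (D * D) * star U := by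
    calc (U * D * star U) * (U * D * star U)
        = U * D * (star U * U) * (D * star U) := by simp only [Matrix.mul_assoc]
      _ = U * (D * D) * star U := by rw [h2, Matrix.mul_one]; simp only [Matrix.mul_assoc]
  rw [hmul]
  simp only [Matrix.mul_sub, Matrix.sub_mul, Matrix.mul_smul, Matrix.smul_mul,
    Matrix.mul_one, h1]

private lemma diag_poly {m : Type*} [Fintype m] [DecidableEq m] (d : m → ℂ) (x y : ℂ) :
    x • Matrix.diagonal d - Matrix.diagonal d * Matrix.diagonal d - y • (1 : Matrix m m ℂ)
      = Matrix.diagonal (fun i => x * d i - d i * d i - y) := by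
  rw [Matrix.diagonal_mul_diagonal]
  ext i j
  rcases eq_or_ne i j with rfl | h
  · simp [Matrix.diagonal_apply_eq, Matrix.one_apply_eq]
  · simp [Matrix.diagonal_apply_ne _ h, Matrix.one_apply_ne h]

set_option maxHeartbeats 1000000 in
theorem stmt_7 (n : ℕ) (A Z : Matrix (Fin n) (Fin n) ℂ)
    (hA0 : A.PosSemidef) (hA1 : (1 - A).PosSemidef) (hZ : Z.PosDef) (a b : ℝ)
    (ha : ∀ i, hZ.1.eigenvalues i ≤ a) (ha' : ∃ i, hZ.1.eigenvalues i = a)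
    (hb : ∀ i, b ≤ hZ.1.eigenvalues i) (hb' : ∃ i, hZ.1.eigenvalues i = b) :
    (((a + b) ^ 2 / (4 * a * b) : ℝ) • Z - A * Z * A).PosSemidef := by
  obtain ⟨i0, hi0⟩ := hb'
  have hbpos : 0 < b := hi0 ▸ hZ.eigenvalues_pos i0
  have hapos : 0 < a := lt_of_lt_of_le (hZ.eigenvalues_pos i0) (hi0 ▸ ha i0)
  have habpos : 0 < a * b := mul_pos hapos hbpos
  -- scalars
  set s : ℝ := Real.sqrt (a * b) with hs
  have hss : s * s = a * b := Real.mul_self_sqrt habpos.le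
  have hspos : 0 < s := Real.sqrt_pos.mpr habpos
  set c : ℝ := (a + b) / (2 * s) with hc
  have hcs : c * s = (a + b) / 2 := by
    field_simp [hc]
    rw [hc]
    field_simp
  have hcc : c * c = (a + b) ^ 2 / (4 * a * b) := by
    rw [hc, div_mul_div_comm, show (2 * s) * (2 * s) = 4 * (s * s) by ring, hss]
    ring_nf
  clear_value s c
  clear hs hc
  -- square root of Z
  obtain ⟨S, hSHm, hSS⟩ : ∃ S : Matrix (Fin n) (Fin n) ℂ, S.PosSemidef ∧ S * S = Z :=
    by
      open scoped MatrixOrder in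
      exact ⟨CFC.sqrt Z, Matrix.nonneg_iff_posSemidef.mp (CFC.sqrt_nonneg Z),
        CFC.sqrt_mul_sqrt_self Z (Matrix.nonneg_iff_posSemidef.mpr hZ.posSemidef)⟩
  have hSH : Sᴴ = S := hSHm.1
  have hSdet : IsUnit S.det := by
    have h2 : IsUnit (S.det * S.det) := by
      rw [← Matrix.det_mul, hSS]
      exact (Matrix.isUnit_iff_isUnit_det Z).mp hZ.isUnit
    exact isUnit_of_mul_isUnit_left h2
  have hS1 : S * S⁻¹ = 1 := Matrix.mul_nonsing_inv S hSdet
  have hS1' : S⁻¹ * S = 1 := Matrix.nonsing_inv_mul S hSdet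
  have hSiH : (S⁻¹)ᴴ = S⁻¹ := by
    rw [Matrix.conjTranspose_nonsing_inv, hSH]
  -- square root of A
  obtain ⟨Q, hQHm, hQQ⟩ : ∃ Q : Matrix (Fin n) (Fin n) ℂ, Q.PosSemidef ∧ Q * Q = A :=
    by
      open scoped MatrixOrder in
      exact ⟨CFC.sqrt A, Matrix.nonneg_iff_posSemidef.mp (CFC.sqrt_nonneg A),
        CFC.sqrt_mul_sqrt_self A (Matrix.nonneg_iff_posSemidef.mpr hA0)⟩
  have hQH : Qᴴ = Q := hQHm.1
  -- the key middle matrix is PSD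
  have hM : (((a + b : ℝ) : ℂ) • Z - Z * Z - ((a * b : ℝ) : ℂ) • 1).PosSemidef := by
    have hZs := hZ.1.spectral_theorem
    have hevb : ∀ i, b ≤ hZ.1.eigenvalues i ∧ hZ.1.eigenvalues i ≤ a := fun i => ⟨hb i, ha i⟩
    set ev := hZ.1.eigenvalues with hev
    set U := (hZ.1.eigenvectorUnitary : Matrix (Fin n) (Fin n) ℂ) with hU
    have hU2 : star U * U = 1 := Matrix.mem_unitaryGroup_iff'.mp hZ.1.eigenvectorUnitary.2
    have hU1 : U * star U = 1 := Matrix.mem_unitaryGroup_iff.mp hZ.1.eigenvectorUnitary.2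
    clear_value ev U
    rw [hZs, Unitary.conjStarAlgAut_apply, ← hU, conj_poly U _ hU1 hU2, diag_poly]
    have hdg : (Matrix.diagonal (fun i => ((a + b : ℝ) : ℂ) * (RCLike.ofReal ∘ ev) i
          - (RCLike.ofReal ∘ ev) i * (RCLike.ofReal ∘ ev) i - ((a * b : ℝ) : ℂ)))
        = Matrix.diagonal (fun i => (((a + b) * ev i - ev i * ev i - a * b : ℝ) : ℂ)) := by
      congr 1
      ext i
      simp only [Function.comp_apply, RCLike.ofReal_alg, Complex.real_smul, mul_one]
      push_cast
      ring
    rw [hdg]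
    refine Matrix.PosSemidef.mul_mul_conjTranspose_same ?_ U
    refine Matrix.posSemidef_diagonal_iff.mpr fun i => ?_
    rw [Complex.zero_le_real]
    nlinarith [(hevb i).1, (hevb i).2]
  -- the three PSD pieces
  set X : Matrix (Fin n) (Fin n) ℂ := (c : ℂ) • S - (s : ℂ) • (S⁻¹ * A) with hX
  have hT1 : (Xᴴ * X).PosSemidef := Matrix.posSemidef_conjTranspose_mul_self X
  have hT2 : (Aᴴ * (S⁻¹ * (((a + b : ℝ) : ℂ) • Z - Z * Z - ((a * b : ℝ) : ℂ) • 1) * S⁻¹) * A).PosSemidef := by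
    refine Matrix.PosSemidef.conjTranspose_mul_mul_same ?_ A
    have h := hM.conjTranspose_mul_mul_same S⁻¹
    rwa [hSiH] at h
  have hT3 : ((((a + b : ℝ)) : ℂ) • (Q * (1 - A) * Q)).PosSemidef := by
    have h := hA1.conjTranspose_mul_mul_same (((Real.sqrt (a + b) : ℝ) : ℂ) • Q)
    have e : (((Real.sqrt (a + b) : ℝ) : ℂ) • Q)ᴴ * (1 - A) * (((Real.sqrt (a + b) : ℝ) : ℂ) • Q)
        = (((a + b : ℝ)) : ℂ) • (Q * (1 - A) * Q) := by
      rw [Matrix.conjTranspose_smul, hQH]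
      simp only [Matrix.smul_mul, Matrix.mul_smul, smul_smul]
      congr 1
      rw [Complex.star_def, Complex.conj_ofReal, ← Complex.ofReal_mul,
        Real.mul_self_sqrt (by positivity)]
    rwa [e] at h
  -- the decomposition identity
  have hAH : Aᴴ = A := hA0.1
  have key2 : (((a + b) ^ 2 / (4 * a * b) : ℝ) • Z - A * Z * A)
      = Xᴴ * X + (Aᴴ * (S⁻¹ * (((a + b : ℝ) : ℂ) • Z - Z * Z - ((a * b : ℝ) : ℂ) • 1) * S⁻¹) * A
        + (((a + b : ℝ)) : ℂ) • (Q * (1 - A) * Q)) := by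
    have hsmul : (((a + b) ^ 2 / (4 * a * b) : ℝ)) • Z = (((a + b) ^ 2 / (4 * a * b) : ℝ) : ℂ) • Z := by
      ext i j
      simp [Complex.real_smul]
    have e1 : S⁻¹ * (((a + b : ℝ) : ℂ) • Z - Z * Z - ((a * b : ℝ) : ℂ) • 1) * S⁻¹
        = ((a + b : ℝ) : ℂ) • (1 : Matrix (Fin n) (Fin n) ℂ) - Z - ((a * b : ℝ) : ℂ) • (S⁻¹ * S⁻¹) := by
      simp only [Matrix.mul_sub, Matrix.sub_mul, Matrix.mul_smul, Matrix.smul_mul, Matrix.mul_one]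
      congr 2
      · congr 1
        rw [← hSS]
        calc S⁻¹ * (S * S) * S⁻¹ = (S⁻¹ * S) * (S * S⁻¹) := by simp only [Matrix.mul_assoc]
          _ = 1 := by rw [hS1', hS1, Matrix.mul_one]
      · rw [← hSS]
        calc S⁻¹ * (S * S * (S * S)) * S⁻¹ = (S⁻¹ * S) * (S * (S * (S * S⁻¹))) := by
              simp only [Matrix.mul_assoc]
          _ = S * S := by rw [hS1', hS1, Matrix.mul_one, Matrix.one_mul]
    have hQAQ : Q * ((1 : Matrix (Fin n) (Fin n) ℂ) - A) * Q = A - A * A := by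
      rw [Matrix.mul_sub, Matrix.sub_mul, Matrix.mul_one, ← hQQ]
      congr 1
      simp only [Matrix.mul_assoc]
    have hXH : Xᴴ = (c : ℂ) • S - (s : ℂ) • (A * S⁻¹) := by
      rw [hX]
      simp [Matrix.conjTranspose_sub, Matrix.conjTranspose_smul, Matrix.conjTranspose_mul,
        hSiH, hSH, hAH, Complex.star_def, Complex.conj_ofReal]
    have hc1 : S * (S⁻¹ * A) = A := by rw [← Matrix.mul_assoc, hS1, Matrix.one_mul]
    have hc2 : A * S⁻¹ * S = A := by rw [Matrix.mul_assoc, hS1', Matrix.mul_one]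
    have hc3 : A * S⁻¹ * (S⁻¹ * A) = A * (S⁻¹ * S⁻¹) * A := by simp only [Matrix.mul_assoc]
    have hXX : Xᴴ * X = ((c * c : ℝ) : ℂ) • Z - ((c * s : ℝ) : ℂ) • A - ((c * s : ℝ) : ℂ) • A
        + ((s * s : ℝ) : ℂ) • (A * (S⁻¹ * S⁻¹) * A) := by
      rw [hXH, hX]
      simp only [Matrix.mul_sub, Matrix.sub_mul, Matrix.mul_smul, Matrix.smul_mul, smul_smul]
      rw [hc1, hc2, hc3, hSS]
      push_cast
      module
    rw [hsmul, hXX, e1, hQAQ, hAH]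
    simp only [Matrix.mul_sub, Matrix.sub_mul, Matrix.mul_smul, Matrix.smul_mul,
      Matrix.mul_one, Matrix.one_mul, smul_sub]
    rw [hcc, hcs, hss]
    push_cast
    module
  rw [key2]
  exact hT1.add (hT2.add hT3)
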